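/- For every n ≥ 0, the number of distinct factors of length n of the infinite Fibonacci word f is exactly n + 1. -/

import Mathlib

def fibPhi (w : List ℕ) : List ℕ := (w.map (fun c => if c = 0 then [0, 1] else [0])).flatten

def fibWord (i : ℕ) : ℕ := ((fibPhi^[i + 2]) [0]).getD i 0

def IsFibFactor (x : List ℕ) : Prop :=
  ∃ i : ℕ, x = (List.range x.length).map (fun t => fibWord (i + t))

open Real goldenRatio

namespace FibAux

def W (k : ℕ) : List ℕ := fibPhi^[k] [0]

lemma fibPhi_append (a b : List ℕ) : fibPhi (a ++ b) = fibPhi a ++ fibPhi b := by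
  simp [fibPhi]

lemma W_succ (k : ℕ) : W (k + 1) = fibPhi (W k) := by
  simp [W, Function.iterate_succ_apply']

lemma W_add_two : ∀ k, W (k + 2) = W (k + 1) ++ W k := by
  intro k
  induction k with
  | zero => decide
  | succ k ih =>
    calc W (k+1+2) = fibPhi (W (k + 2)) := W_succ (k+2)
      _ = fibPhi (W (k+1) ++ W k) := by rw [ih]
      _ = fibPhi (W (k+1)) ++ fibPhi (W k) := fibPhi_append _ _
      _ = W (k+1+1) ++ W (k+1) := by rw [← W_succ, ← W_succ]

lemma W_length : ∀ k, (W k).length = Nat.fib (k + 2) := by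
  intro k
  induction k using Nat.strong_induction_on with
  | _ k ih =>
    match k with
    | 0 => decide
    | 1 => decide
    | (k+2) =>
      rw [W_add_two, List.length_append, ih (k+1) (by omega), ih k (by omega),
        Nat.fib_add_two (n := k+2)]
      rw [show k+1+2 = k+3 from rfl, show k+2+1 = k+3 from rfl]
      omega

lemma W_getD_stable : ∀ k, ∀ i < Nat.fib (k + 2), (W (k+1)).getD i 0 = (W k).getD i 0 := by
  intro k i hi
  match k with
  | 0 => interval_cases i; decide
  | (k+1) =>
    rw [W_add_two, List.getD_append]
    rw [W_length]; exact hi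

lemma W_getD_stable' : ∀ k k', k ≤ k' → ∀ i < Nat.fib (k + 2), (W k').getD i 0 = (W k).getD i 0 := by
  intro k k' h
  induction k' with
  | zero =>
    intro i hi
    have : k = 0 := by omega
    subst this; rfl
  | succ k' ih =>
    intro i hi
    rcases Nat.eq_or_lt_of_le h with rfl | h'
    · rfl
    · have hk : k ≤ k' := by omega
      rw [W_getD_stable k' i (lt_of_lt_of_le hi (Nat.fib_mono (by omega))), ih hk i hi]

lemma lt_fib_add_two (i : ℕ) : i < Nat.fib (i + 2) := by
  induction i with
  | zero => decide
  | succ i ih =>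
    have h2 : 1 ≤ Nat.fib (i + 1) := Nat.fib_pos.mpr (by omega)
    have := Nat.fib_add_two (n := i + 1)
    rw [show i+1+1 = i+2 from rfl] at this
    omega

lemma fibWord_eq_W (k i : ℕ) (hi : i < Nat.fib (k + 2)) : fibWord i = (W k).getD i 0 := by
  have h1 : fibWord i = (W (i+2)).getD i 0 := rfl
  rcases le_total k (i + 2) with h | h
  · rw [h1, W_getD_stable' k (i+2) h i hi]
  · rw [h1, ← W_getD_stable' (i+2) k h i
      (lt_of_lt_of_le (lt_fib_add_two i) (Nat.fib_mono (by omega)))]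


noncomputable def al : ℝ := (3 - √5) / 2

lemma sqrt5_sq : √5 * √5 = 5 := Real.mul_self_sqrt (by norm_num)
lemma sqrt5_gt : (2.236 : ℝ) < √5 := by
  nlinarith [sqrt5_sq, Real.sqrt_nonneg 5]
lemma sqrt5_lt : √5 < 2.2361 := by
  nlinarith [sqrt5_sq, Real.sqrt_nonneg 5]

lemma al_eq : al = 2 - φ := by unfold al goldenRatio; ring

lemma al_pos : 0 < al := by unfold al; nlinarith [sqrt5_lt]
lemma al_lt_half : al < 1/2 := by unfold al; nlinarith [sqrt5_gt]

noncomputable def q : ℝ := -ψ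

lemma q_pos : 0 < q := by unfold q; linarith [goldenConj_neg]
lemma q_lt_one : q < 1 := by unfold q; linarith [neg_one_lt_goldenConj]
lemma q_gt_half : 1/2 < q := by unfold q goldenConj; nlinarith [sqrt5_gt]
lemma q_sq : q^2 = 1 - q := by
  unfold q; rw [neg_pow]; simp [goldenConj_sq]; ring
lemma abs_psi_pow (m : ℕ) : |ψ^m| = q^m := by
  rw [abs_pow, abs_of_neg goldenConj_neg]; rfl

lemma q_pow_le (m n : ℕ) (h : n ≤ m) : q^m ≤ q^n :=
  pow_le_pow_of_le_one (le_of_lt q_pos) (le_of_lt q_lt_one) h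

lemma fib_gold (m : ℕ) : (Nat.fib m : ℝ) * φ = Nat.fib (m+1) - ψ^m := by
  have := fib_succ_sub_goldenRatio_mul_fib m
  linarith

/-- best approximation property -/
lemma BA : ∀ m : ℕ, ∀ t : ℕ, 1 ≤ t → t < Nat.fib (m+1) → ∀ z : ℤ,
    q^m ≤ |(t:ℝ) * φ - z| := by
  intro m
  induction m using Nat.strong_induction_on with
  | _ m ih =>
    match m with
    | 0 => intro t h1 h2; simp at h2; omega
    | 1 => intro t h1 h2; simp at h2; omega
    | (m+2) =>
      intro t h1 h2 z
      rcases lt_or_ge t (Nat.fib (m+2)) with hlt | hge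
      · calc q^(m+2) ≤ q^(m+1) := q_pow_le _ _ (by omega)
          _ ≤ |(t:ℝ) * φ - z| := ih (m+1) (by omega) t h1 hlt z
      · -- t = fib (m+2) + s, s < fib (m+1)
        obtain ⟨s, rfl⟩ := Nat.exists_eq_add_of_le hge
        have hs : s < Nat.fib (m+1) := by
          have := Nat.fib_add_two (n := m+1)
          rw [show m+1+1 = m+2 from rfl, show m+1+2 = m+3 from rfl] at this
          rw [show m+2+1 = m+3 from rfl] at h2
          omega
        have hexp : ((Nat.fib (m+2) + s : ℕ):ℝ) * φ - z
            = ((s:ℝ) * φ - (z - Nat.fib (m+3))) - ψ^(m+2) := by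
          push_cast
          have := fib_gold (m+2)
          rw [show m+2+1 = m+3 from rfl] at this
          nlinarith [this]
        rcases Nat.eq_zero_or_pos s with rfl | hs1
        · rw [hexp]
          rcases eq_or_ne z (Nat.fib (m+3)) with rfl | hne
          · have heq : ((0:ℕ):ℝ) * φ - ((((Nat.fib (m+3) : ℕ):ℤ):ℝ) - ((Nat.fib (m+3):ℕ):ℝ)) - ψ^(m+2)
                = -ψ^(m+2) := by push_cast; ring
            rw [heq, abs_neg, abs_psi_pow]
          · have h1' : (1:ℝ) ≤ |(z:ℝ) - Nat.fib (m+3)| := by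
              rw [show ((z:ℝ) - Nat.fib (m+3)) = ((z - Nat.fib (m+3) : ℤ) : ℝ) by push_cast; ring]
              rw [← Int.cast_abs]
              exact_mod_cast Int.one_le_abs (by omega)
            have hqm : q^(m+2) ≤ q^2 := q_pow_le _ _ (by omega)
            have habs : |ψ^(m+2)| = q^(m+2) := abs_psi_pow _
            have : |((0:ℕ):ℝ) * φ - ((z:ℝ) - Nat.fib (m+3)) - ψ^(m+2)| ≥
                |(z:ℝ) - Nat.fib (m+3)| - |ψ^(m+2)| := by
              simp only [Nat.cast_zero, zero_mul, zero_sub]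
              calc |-(((z:ℝ) - Nat.fib (m+3))) - ψ^(m+2)|
                  ≥ |-(((z:ℝ) - Nat.fib (m+3)))| - |ψ^(m+2)| := abs_sub_abs_le_abs_sub _ _
                _ = |(z:ℝ) - Nat.fib (m+3)| - |ψ^(m+2)| := by rw [abs_neg]
            have hq2 : q^2 ≤ 1/2 := by rw [q_sq]; linarith [q_gt_half]
            calc q^(m+2) ≤ 1 - q^(m+2) := by linarith [hqm, hq2]
              _ ≤ |(z:ℝ) - Nat.fib (m+3)| - |ψ^(m+2)| := by rw [habs]; linarith
              _ ≤ _ := this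
        · -- s ≥ 1
          have ihs := ih m (by omega) s hs1 hs (z - Nat.fib (m+3))
          rw [hexp]
          have habs : |ψ^(m+2)| = q^(m+2) := abs_psi_pow _
          have hcast : ((z - Nat.fib (m+3) : ℤ):ℝ) = (z:ℝ) - Nat.fib (m+3) := by push_cast; ring
          rw [hcast] at ihs
          have tri : |(s:ℝ) * φ - ((z:ℝ) - Nat.fib (m+3)) - ψ^(m+2)|
              ≥ |(s:ℝ) * φ - ((z:ℝ) - Nat.fib (m+3))| - |ψ^(m+2)| := abs_sub_abs_le_abs_sub _ _
          have step : q^m - q^(m+2) = q^(m+1) := by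
            have : q^(m+2) = q^m * q^2 := by ring
            rw [this, q_sq]; ring
          have : q^(m+1) ≤ |(s:ℝ) * φ - ((z:ℝ) - Nat.fib (m+3))| - |ψ^(m+2)| := by
            rw [habs]; linarith
          calc q^(m+2) ≤ q^(m+1) := q_pow_le _ _ (by omega)
            _ ≤ _ := le_trans this tri

end FibAux

namespace FibAux

lemma KEY (m : ℕ) (hm : 2 ≤ m) (t : ℕ) (h1 : 1 ≤ t) (h2 : t ≤ Nat.fib m) :
    ⌊(t:ℝ) * al + ψ^m⌋ = ⌊(t:ℝ) * al⌋ := by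
  have habs : |ψ^m| = q^m := abs_psi_pow m
  have hq2 : q^m ≤ q^2 := q_pow_le _ _ hm
  have hq2' : q^2 < 1/2 := by rw [q_sq]; linarith [q_gt_half]
  have hub : ψ^m < 1/2 := by
    have : ψ^m ≤ |ψ^m| := le_abs_self _
    rw [habs] at this; linarith
  have hlb : -(1/2) < ψ^m := by
    have : -(ψ^m) ≤ |ψ^m| := neg_le_abs _
    rw [habs] at this; linarith
  rcases eq_or_lt_of_le h2 with rfl | hlt
  · -- t = fib m
    have hal : (Nat.fib m : ℝ) * al = ((2 * Nat.fib m - Nat.fib (m+1) : ℤ) : ℝ) + ψ^m := by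
      rw [al_eq]
      have := fib_gold m
      push_cast
      linarith
    rw [hal, add_assoc, Int.floor_intCast_add, Int.floor_intCast_add]
    congr 1
    rcases le_or_gt 0 (ψ^m) with hpos | hneg
    · rw [Int.floor_eq_zero_iff.2 ⟨by linarith, by linarith⟩,
        Int.floor_eq_zero_iff.2 ⟨hpos, by linarith⟩]
    · have e1 : ⌊ψ^m + ψ^m⌋ = -1 := by
        rw [Int.floor_eq_iff]
        push_cast
        constructor <;> linarith
      have e2 : ⌊ψ^m⌋ = -1 := by
        rw [Int.floor_eq_iff]
        push_cast
        constructor <;> linarith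
      rw [e1, e2]
  · -- t < fib m
    have hBA := BA (m-1) t h1 (by rwa [Nat.sub_add_cancel (by omega)])
    set F := ⌊(t:ℝ) * al⌋ with hF
    have hfr0 : 0 ≤ (t:ℝ) * al - F := by
      have := Int.floor_le ((t:ℝ) * al); linarith
    have hfr1 : (t:ℝ) * al - F < 1 := by
      have := Int.lt_floor_add_one ((t:ℝ) * al); linarith
    have hze : (t:ℝ) * φ - ((2 * t - F : ℤ):ℝ) = -((t:ℝ) * al - F) := by
      rw [al_eq]; push_cast; ring
    have h1' : q^(m-1) ≤ (t:ℝ) * al - F := by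
      have := hBA (2 * t - F)
      rw [hze, abs_neg, abs_of_nonneg hfr0] at this
      exact this
    have hze2 : (t:ℝ) * φ - ((2 * t - F - 1 : ℤ):ℝ) = 1 - ((t:ℝ) * al - F) := by
      rw [al_eq]; push_cast; ring
    have h2' : q^(m-1) ≤ 1 - ((t:ℝ) * al - F) := by
      have := hBA (2 * t - F - 1)
      rw [hze2, abs_of_nonneg (by linarith)] at this
      exact this
    have hqlt : q^m < q^(m-1) := by
      have h : q^m = q^(m-1) * q := by
        rw [← pow_succ, Nat.sub_add_cancel (by omega)]
      rw [h]
      nlinarith [pow_pos q_pos (m-1), q_lt_one, q_pos]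
    have hpsb : -q^(m-1) < ψ^m ∧ ψ^m < q^(m-1) := by
      constructor
      · have : -(ψ^m) ≤ |ψ^m| := neg_le_abs _
        rw [habs] at this; linarith
      · have : ψ^m ≤ |ψ^m| := le_abs_self _
        rw [habs] at this; linarith
    rw [Int.floor_eq_iff]
    constructor
    · linarith [hpsb.1]
    · push_cast
      linarith [hpsb.2]


/-- the floor-formula letter -/
noncomputable def fl (i : ℕ) : ℤ := ⌊((i:ℝ)+2) * al⌋ - ⌊((i:ℝ)+1) * al⌋

lemma floor_shift (k : ℕ) (hk : 2 ≤ k) (t : ℕ) (h1 : 1 ≤ t) (h2 : t ≤ Nat.fib k + 1) :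
    ⌊((Nat.fib (k+1) + t : ℕ):ℝ) * al⌋
      = (2 * Nat.fib (k+1) - Nat.fib (k+2) : ℤ) + ⌊(t:ℝ) * al⌋ := by
  have hft : t ≤ Nat.fib (k+1) := by
    have h3 : Nat.fib (k-1) ≥ 1 := Nat.fib_pos.mpr (by omega)
    have h4 : Nat.fib (k+1) = Nat.fib (k-1) + Nat.fib k := by
      have := Nat.fib_add_two (n := k-1)
      rw [show k-1+2 = k+1 by omega, show k-1+1 = k by omega] at this
      omega
    omega
  have hal : ((Nat.fib (k+1) + t : ℕ):ℝ) * al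
      = ((2 * Nat.fib (k+1) - Nat.fib (k+2) : ℤ):ℝ) + ((t:ℝ) * al + ψ^(k+1)) := by
    rw [al_eq]
    have := fib_gold (k+1)
    push_cast
    rw [show k+1+1 = k+2 from rfl] at this
    nlinarith [this]
  rw [hal, Int.floor_intCast_add, KEY (k+1) (by omega) t h1 hft]

lemma fl_shift (k : ℕ) (hk : 2 ≤ k) (j : ℕ) (hj : j < Nat.fib k) :
    fl (Nat.fib (k+1) + j) = fl j := by
  unfold fl
  have e1 : ((Nat.fib (k+1) + j : ℕ):ℝ) + 2 = ((Nat.fib (k+1) + (j+2) : ℕ):ℝ) := by push_cast; ring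
  have e2 : ((Nat.fib (k+1) + j : ℕ):ℝ) + 1 = ((Nat.fib (k+1) + (j+1) : ℕ):ℝ) := by push_cast; ring
  rw [e1, e2, floor_shift k hk (j+2) (by omega) (by omega),
    floor_shift k hk (j+1) (by omega) (by omega)]
  have e3 : ((j:ℝ)+2) = (((j+2:ℕ)):ℝ) := by push_cast; ring
  have e4 : ((j:ℝ)+1) = (((j+1:ℕ)):ℝ) := by push_cast; ring
  rw [e3, e4]
  ring

lemma floor_al : ⌊al⌋ = 0 :=
  Int.floor_eq_zero_iff.2 ⟨le_of_lt al_pos, by linarith [al_lt_half]⟩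
lemma floor_2al : ⌊2*al⌋ = 0 :=
  Int.floor_eq_zero_iff.2 ⟨by linarith [al_pos], by linarith [al_lt_half]⟩
lemma floor_3al : ⌊3*al⌋ = 1 := by
  rw [Int.floor_eq_iff]
  unfold al
  constructor
  · push_cast; nlinarith [sqrt5_lt]
  · push_cast; nlinarith [sqrt5_gt]

lemma fl_zero : fl 0 = 0 := by
  unfold fl
  norm_num
  rw [floor_2al, floor_al]
  norm_num

lemma fl_one : fl 1 = 1 := by
  unfold fl
  norm_num
  rw [floor_3al, floor_2al]
  norm_num

lemma getD_eq_fl : ∀ k, ∀ i < Nat.fib (k+2), (((W k).getD i 0 : ℕ) : ℤ) = fl i := by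
  intro k
  induction k using Nat.strong_induction_on with
  | _ k ih =>
    match k with
    | 0 =>
      intro i hi
      interval_cases i
      · rw [fl_zero]; rfl
    | 1 =>
      intro i hi
      interval_cases i
      · rw [fl_zero]; rfl
      · rw [fl_one]; rfl
    | (k+2) =>
      intro i hi
      rw [W_add_two]
      rcases lt_or_ge i (Nat.fib (k+3)) with hlt | hge
      · rw [List.getD_append _ _ _ _ (by rw [W_length]; exact hlt)]
        exact ih (k+1) (by omega) i hlt
      · have hlen : (W (k+1)).length ≤ i := by rw [W_length]; exact hge
        rw [List.getD_append_right _ _ _ _ hlen]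
        rw [W_length]
        have hi' : i - Nat.fib (k+3) < Nat.fib (k+2) := by
          have := Nat.fib_add_two (n := k+2)
          rw [show k+2+2 = k+4 from rfl, show k+2+1 = k+3 from rfl] at this
          rw [show k+2+2 = k+4 from rfl] at hi
          omega
        rw [ih k (by omega) _ hi']
        conv_rhs => rw [show i = Nat.fib (k+3) + (i - Nat.fib (k+3)) by omega]
        exact (fl_shift (k+2) (by omega) _ hi').symm

lemma fibWord_cast (i : ℕ) : ((fibWord i : ℕ) : ℤ) = fl i := by
  rw [fibWord_eq_W i i (lt_fib_add_two i)]
  exact getD_eq_fl i i (lt_fib_add_two i)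

lemma fl_nonneg (i : ℕ) : 0 ≤ fl i := by
  unfold fl
  have : ((i:ℝ)+1) * al ≤ ((i:ℝ)+2) * al := by nlinarith [al_pos]
  have := Int.floor_le_floor this
  omega

lemma fl_le_one (i : ℕ) : fl i ≤ 1 := by
  unfold fl
  have h : ((i:ℝ)+2) * al < ((i:ℝ)+1) * al + 1 := by nlinarith [al_lt_half]
  have h2 : ⌊((i:ℝ)+2) * al⌋ ≤ ⌊((i:ℝ)+1) * al + 1⌋ := Int.floor_le_floor (le_of_lt h)
  rw [Int.floor_add_one] at h2
  omega


lemma irr_al : Irrational al :=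
  ((Nat.prime_five.irrational_sqrt).natCast_sub 3).div_natCast two_ne_zero

lemma irr_mul_al (s : ℕ) (hs : 1 ≤ s) : Irrational ((s:ℝ) * al) :=
  irr_al.natCast_mul (by omega)

lemma fract_pos_mul_al (s : ℕ) (hs : 1 ≤ s) : 0 < Int.fract ((s:ℝ) * al) := by
  rcases lt_or_eq_of_le (Int.fract_nonneg ((s:ℝ) * al)) with h | h
  · exact h
  · exfalso
    have : (s:ℝ) * al = ⌊(s:ℝ) * al⌋ := by
      have := Int.fract_add_floor ((s:ℝ) * al)
      rw [← h] at this; linarith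
    exact (irr_mul_al s hs).ne_int _ this

noncomputable def theta (i : ℕ) : ℝ := Int.fract (((i:ℝ)+1) * al)
noncomputable def cpt (k : ℕ) : ℝ := Int.fract (-((k:ℝ) * al))
noncomputable def S (n i : ℕ) : Finset ℕ :=
  (Finset.range (n+1)).filter (fun k => cpt k ≤ theta i)
def Fac (i n : ℕ) : List ℕ := (List.range n).map (fun t => fibWord (i + t))

lemma theta_mem (i : ℕ) : 0 ≤ theta i ∧ theta i < 1 :=
  ⟨Int.fract_nonneg _, Int.fract_lt_one _⟩

lemma cpt_eq (s : ℕ) (hs : 1 ≤ s) : cpt s = 1 - Int.fract ((s:ℝ) * al) := by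
  unfold cpt
  exact Int.fract_neg (ne_of_gt (fract_pos_mul_al s hs))

/-- floor of x + s·α splits according to the cut point -/
lemma D1 (x : ℝ) (hx0 : 0 ≤ x) (hx1 : x < 1) (s : ℕ) (hs : 1 ≤ s) :
    ⌊x + (s:ℝ) * al⌋ = ⌊(s:ℝ) * al⌋ + (if cpt s ≤ x then 1 else 0) := by
  have hfr0 : 0 < Int.fract ((s:ℝ) * al) := fract_pos_mul_al s hs
  have hfr1 : Int.fract ((s:ℝ) * al) < 1 := Int.fract_lt_one _
  have hsplit : x + (s:ℝ) * al = (⌊(s:ℝ) * al⌋ : ℝ) + (x + Int.fract ((s:ℝ) * al)) := by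
    have := Int.fract_add_floor ((s:ℝ) * al)
    linarith
  rw [hsplit, Int.floor_intCast_add]
  congr 1
  rw [cpt_eq s hs]
  split_ifs with h
  · rw [Int.floor_eq_iff]
    constructor
    · push_cast; linarith
    · push_cast; linarith
  · rw [Int.floor_eq_zero_iff]
    exact ⟨by linarith, by linarith⟩

lemma D2 (i s : ℕ) : ⌊((i:ℝ)+1+(s:ℝ)) * al⌋ = ⌊((i:ℝ)+1) * al⌋ + ⌊theta i + (s:ℝ) * al⌋ := by
  have hsplit : ((i:ℝ)+1+(s:ℝ)) * al = (⌊((i:ℝ)+1) * al⌋ : ℝ) + (theta i + (s:ℝ) * al) := by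
    unfold theta
    have := Int.fract_add_floor (((i:ℝ)+1) * al)
    nlinarith [this]
  rw [hsplit, Int.floor_intCast_add]

lemma fl_window (i t : ℕ) :
    fl (i + t) = ⌊theta i + ((t:ℝ)+1) * al⌋ - ⌊theta i + (t:ℝ) * al⌋ := by
  unfold fl
  have e1 : ((i+t : ℕ):ℝ) + 2 = ((i:ℝ)+1+((t:ℝ)+1)) := by push_cast; ring
  have e2 : ((i+t : ℕ):ℝ) + 1 = ((i:ℝ)+1+(t:ℝ)) := by push_cast; ring
  rw [e1, e2]
  have h1 := D2 i (t+1)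
  have h2 := D2 i t
  push_cast at h1
  rw [h1, h2]
  ring

lemma floor_theta_add (n i j : ℕ) (hS : S n i = S n j) :
    ∀ s ≤ n, ⌊theta i + (s:ℝ) * al⌋ = ⌊theta j + (s:ℝ) * al⌋ := by
  intro s hs
  rcases Nat.eq_zero_or_pos s with rfl | hs1
  · simp only [Nat.cast_zero, zero_mul, add_zero]
    rw [Int.floor_eq_zero_iff.2 ⟨(theta_mem i).1, (theta_mem i).2⟩,
      Int.floor_eq_zero_iff.2 ⟨(theta_mem j).1, (theta_mem j).2⟩]
  · rw [D1 _ (theta_mem i).1 (theta_mem i).2 s hs1, D1 _ (theta_mem j).1 (theta_mem j).2 s hs1]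
    congr 1
    have hmem : s ∈ S n i ↔ s ∈ S n j := by rw [hS]
    unfold S at hmem
    simp only [Finset.mem_filter, Finset.mem_range] at hmem
    have hr : s < n + 1 := by omega
    by_cases h : cpt s ≤ theta i
    · rw [if_pos h, if_pos ((hmem.mp ⟨hr, h⟩).2)]
    · rw [if_neg h]
      by_cases h' : cpt s ≤ theta j
      · exact absurd ((hmem.mpr ⟨hr, h'⟩).2) h
      · rw [if_neg h']

lemma DET (n i j : ℕ) (hS : S n i = S n j) : Fac i n = Fac j n := by
  unfold Fac
  rw [List.map_eq_map_iff]
  intro t ht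
  rw [List.mem_range] at ht
  have : ((fibWord (i+t) : ℕ) : ℤ) = ((fibWord (j+t) : ℕ) : ℤ) := by
    have ha := floor_theta_add n i j hS (t+1) (by omega)
    have hb := floor_theta_add n i j hS t (by omega)
    push_cast at ha
    rw [fibWord_cast, fibWord_cast, fl_window, fl_window, ha, hb]
  exact_mod_cast this

lemma TOT (n i j : ℕ) (hc : (S n i).card = (S n j).card) : S n i = S n j := by
  have key : ∀ a b : ℕ, theta a ≤ theta b → S n a ⊆ S n b := by
    intro a b h k hk
    unfold S at *
    simp only [Finset.mem_filter, Finset.mem_range] at *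
    exact ⟨hk.1, le_trans hk.2 h⟩
  rcases le_total (theta i) (theta j) with h | h
  · exact Finset.eq_of_subset_of_card_le (key i j h) (le_of_eq hc.symm)
  · exact (Finset.eq_of_subset_of_card_le (key j i h) (le_of_eq hc)).symm

lemma S_card_bounds (n i : ℕ) : 1 ≤ (S n i).card ∧ (S n i).card ≤ n + 1 := by
  constructor
  · have h0 : (0:ℕ) ∈ S n i := by
      unfold S
      simp only [Finset.mem_filter, Finset.mem_range]
      refine ⟨by omega, ?_⟩
      have hc0 : cpt 0 = 0 := by unfold cpt; norm_num
      rw [hc0]; exact (theta_mem i).1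
    exact Finset.card_pos.mpr ⟨0, h0⟩
  · calc (S n i).card ≤ (Finset.range (n+1)).card := Finset.card_filter_le _ _
      _ = n + 1 := Finset.card_range _


def NN (n : ℕ) : Set (List ℕ) := {x | IsFibFactor x ∧ x.length = n}

lemma Fac_length (i n : ℕ) : (Fac i n).length = n := by simp [Fac]

lemma mem_NN (n : ℕ) (x : List ℕ) : x ∈ NN n ↔ ∃ i, x = Fac i n := by
  constructor
  · rintro ⟨⟨i, hx⟩, hlen⟩
    refine ⟨i, ?_⟩
    rw [hlen] at hx
    exact hx
  · rintro ⟨i, rfl⟩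
    exact ⟨⟨i, by rw [Fac_length]; rfl⟩, Fac_length i n⟩

open Classical in
noncomputable def gmap (n : ℕ) : List ℕ → ℕ :=
  fun x => if h : ∃ i, x = Fac i n then (S n h.choose).card else 0

lemma NN_finite_card (n : ℕ) : (NN n).Finite ∧ (NN n).ncard ≤ n + 1 := by
  have hmaps : ∀ x ∈ NN n, gmap n x ∈ ((Finset.Icc 1 (n+1) : Finset ℕ) : Set ℕ) := by
    intro x hx
    obtain ⟨i, rfl⟩ := (mem_NN n x).1 hx
    have h : ∃ i', Fac i n = Fac i' n := ⟨i, rfl⟩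
    simp only [gmap]
    rw [dif_pos h]
    simp only [Finset.coe_Icc, Set.mem_Icc]
    exact ⟨(S_card_bounds n _).1, (S_card_bounds n _).2⟩
  have hinj : Set.InjOn (gmap n) (NN n) := by
    intro x hx y hy hxy
    obtain ⟨i, rfl⟩ := (mem_NN n x).1 hx
    obtain ⟨j, rfl⟩ := (mem_NN n y).1 hy
    have h1 : ∃ i', Fac i n = Fac i' n := ⟨i, rfl⟩
    have h2 : ∃ i', Fac j n = Fac i' n := ⟨j, rfl⟩
    simp only [gmap] at hxy
    rw [dif_pos h1, dif_pos h2] at hxy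
    have hSe := TOT n h1.choose h2.choose hxy
    calc Fac i n = Fac h1.choose n := h1.choose_spec
      _ = Fac h2.choose n := DET n _ _ hSe
      _ = Fac j n := h2.choose_spec.symm
  constructor
  · apply Set.Finite.of_finite_image _ hinj
    exact Set.Finite.subset (Finset.finite_toSet (Finset.Icc 1 (n+1))) (Set.image_subset_iff.2 hmaps)
  · calc (NN n).ncard ≤ ((Finset.Icc 1 (n+1) : Finset ℕ) : Set ℕ).ncard :=
        Set.ncard_le_ncard_of_injOn (gmap n) hmaps hinj (Finset.finite_toSet _)
      _ = (Finset.Icc 1 (n+1)).card := Set.ncard_coe_finset _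
      _ = n + 1 := by rw [Nat.card_Icc]; omega

lemma take_Fac (i n : ℕ) : (Fac i (n+1)).take n = Fac i n := by
  unfold Fac
  rw [← List.map_take, List.take_range, Nat.min_eq_left (by omega)]

lemma image_take (n : ℕ) : (fun x : List ℕ => x.take n) '' NN (n+1) = NN n := by
  ext y
  constructor
  · rintro ⟨x, hx, rfl⟩
    obtain ⟨i, rfl⟩ := (mem_NN _ _).1 hx
    show List.take n (Fac i (n+1)) ∈ NN n
    rw [take_Fac]
    exact (mem_NN _ _).2 ⟨i, rfl⟩
  · intro hy
    obtain ⟨i, rfl⟩ := (mem_NN _ _).1 hy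
    exact ⟨Fac i (n+1), (mem_NN _ _).2 ⟨i, rfl⟩, take_Fac i n⟩

lemma NN_mono (n : ℕ) : (NN n).ncard ≤ (NN (n+1)).ncard := by
  conv_lhs => rw [← image_take n]
  exact Set.ncard_image_le (NN_finite_card (n+1)).1

lemma next_letter (n : ℕ) (h : (NN (n+1)).ncard = (NN n).ncard) :
    ∀ i j, Fac i n = Fac j n → fibWord (i + n) = fibWord (j + n) := by
  have hinj : Set.InjOn (fun x : List ℕ => x.take n) (NN (n+1)) := by
    apply Set.injOn_of_ncard_image_eq
    · rw [image_take n, h]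
    · exact (NN_finite_card (n+1)).1
  intro i j hfac
  have hx : Fac i (n+1) ∈ NN (n+1) := (mem_NN _ _).2 ⟨i, rfl⟩
  have hy : Fac j (n+1) ∈ NN (n+1) := (mem_NN _ _).2 ⟨j, rfl⟩
  have heq : Fac i (n+1) = Fac j (n+1) := hinj hx hy (by
    simp only [take_Fac]
    exact hfac)
  unfold Fac at heq
  exact List.map_eq_map_iff.1 heq n (List.mem_range.2 (by omega))

lemma window_step (n : ℕ) (h : (NN (n+1)).ncard = (NN n).ncard) :
    ∀ i j, Fac i n = Fac j n → Fac (i+1) n = Fac (j+1) n := by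
  intro i j hfac
  unfold Fac
  rw [List.map_eq_map_iff]
  intro t ht
  rw [List.mem_range] at ht
  rcases eq_or_lt_of_le (Nat.succ_le_of_lt ht) with he | hlt
  · rw [show i + 1 + t = i + n by omega, show j + 1 + t = j + n by omega]
    exact next_letter n h i j hfac
  · have h2 := List.map_eq_map_iff.1 (by unfold Fac at hfac; exact hfac) (t+1)
      (List.mem_range.2 (by omega))
    rw [show i + 1 + t = i + (t+1) by omega, show j + 1 + t = j + (t+1) by omega]
    exact h2

lemma eventually_periodic (n : ℕ) (h : (NN (n+1)).ncard = (NN n).ncard) :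
    ∃ a p, 1 ≤ p ∧ ∀ d, fibWord (a + d + p) = fibWord (a + d) := by
  have hfin := (NN_finite_card n).1
  have hub := (NN_finite_card n).2
  have hcard : hfin.toFinset.card < (Finset.range (n+2)).card := by
    rw [Finset.card_range, ← Set.ncard_eq_toFinset_card _ hfin]
    omega
  have hmaps : ∀ i ∈ Finset.range (n+2), Fac i n ∈ hfin.toFinset := by
    intro i _
    rw [Set.Finite.mem_toFinset]
    exact (mem_NN _ _).2 ⟨i, rfl⟩
  obtain ⟨x, -, y, -, hne, hxy⟩ :=
    Finset.exists_ne_map_eq_of_card_lt_of_maps_to hcard hmaps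
  -- wlog x < y
  have main : ∀ x y : ℕ, x < y → Fac x n = Fac y n →
      ∃ a p, 1 ≤ p ∧ ∀ d, fibWord (a + d + p) = fibWord (a + d) := by
    intro x y hlt hfac
    have hfd : ∀ d, Fac (x+d) n = Fac (y+d) n := by
      intro d
      induction d with
      | zero => simpa using hfac
      | succ d ih =>
        rw [show x+(d+1) = (x+d)+1 by omega, show y+(d+1) = (y+d)+1 by omega]
        exact window_step n h _ _ ih
    refine ⟨x + n, y - x, by omega, ?_⟩
    intro d
    have hnl := next_letter n h (x+d) (y+d) (hfd d)
    rw [show x + n + d + (y - x) = y + d + n by omega, show x + n + d = x + d + n by omega]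
    exact hnl.symm
  rcases lt_or_gt_of_ne hne with hlt | hgt
  · exact main x y hlt hxy
  · exact main y x hgt hxy.symm

lemma sum_fl (A : ℕ) : ∀ M : ℕ,
    ∑ t ∈ Finset.range M, fl (A + t) = ⌊((A:ℝ)+((M:ℕ):ℝ)+1) * al⌋ - ⌊((A:ℝ)+1) * al⌋ := by
  intro M
  induction M with
  | zero => simp
  | succ M ih =>
    rw [Finset.sum_range_succ, ih]
    unfold fl
    have e1 : (((A+M:ℕ)):ℝ) + 2 = (A:ℝ) + (((M+1:ℕ)):ℝ) + 1 := by push_cast; ring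
    have e2 : (((A+M:ℕ)):ℝ) + 1 = (A:ℝ) + ((M:ℕ):ℝ) + 1 := by push_cast; ring
    rw [e1, e2]
    ring

lemma fibWord_shift_per (a p : ℕ) (hper : ∀ d, fibWord (a + d + p) = fibWord (a + d)) :
    ∀ c d, fibWord (a + d + c * p) = fibWord (a + d) := by
  intro c
  induction c with
  | zero => simp
  | succ c ih =>
    intro d
    rw [show a + d + (c+1) * p = a + (d + c * p) + p by ring, hper (d + c * p),
      show a + (d + c * p) = a + d + c * p by ring, ih d]

lemma per_sum (a p : ℕ) (hper : ∀ d, fibWord (a + d + p) = fibWord (a + d)) :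
    ∀ M : ℕ, ∑ t ∈ Finset.range (M * p), (fibWord (a + t) : ℤ)
        = M * ∑ t ∈ Finset.range p, (fibWord (a + t) : ℤ) := by
  intro M
  induction M with
  | zero => simp
  | succ M ih =>
    rw [show (M+1) * p = M * p + p by ring, Finset.sum_range_add, ih]
    have : ∀ t ∈ Finset.range p, (fibWord (a + (M * p + t)) : ℤ) = (fibWord (a + t) : ℤ) := by
      intro t _
      rw [show a + (M * p + t) = a + t + M * p by ring, fibWord_shift_per a p hper M t]
    rw [Finset.sum_congr rfl this]
    push_cast
    ring

lemma not_periodic (a p : ℕ) (hp : 1 ≤ p)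
    (hper : ∀ d, fibWord (a + d + p) = fibWord (a + d)) : False := by
  set s : ℤ := ∑ t ∈ Finset.range p, (fibWord (a + t) : ℤ) with hs
  have hM : ∀ M : ℕ, (⌊((a:ℝ)+((M*p:ℕ):ℝ)+1) * al⌋ - ⌊((a:ℝ)+1) * al⌋ : ℤ) = M * s := by
    intro M
    rw [← sum_fl a (M*p)]
    have : ∀ t ∈ Finset.range (M*p), fl (a + t) = (fibWord (a + t) : ℤ) := by
      intro t _
      exact (fibWord_cast (a+t)).symm
    rw [Finset.sum_congr rfl this, per_sum a p hper M]
  have key : ∀ M : ℕ, |(M:ℝ) * ((p:ℝ) * al - (s:ℝ))| < 2 := by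
    intro M
    have h := hM M
    set X := ((a:ℝ)+((M*p:ℕ):ℝ)+1) * al with hX
    set Y := ((a:ℝ)+1) * al with hY
    have hX1 : (⌊X⌋:ℝ) ≤ X := Int.floor_le X
    have hX2 : X < ⌊X⌋ + 1 := Int.lt_floor_add_one X
    have hY1 : (⌊Y⌋:ℝ) ≤ Y := Int.floor_le Y
    have hY2 : Y < ⌊Y⌋ + 1 := Int.lt_floor_add_one Y
    have hcast : (⌊X⌋:ℝ) - (⌊Y⌋:ℝ) = (M:ℝ) * (s:ℝ) := by
      have h2 := congrArg (Int.cast : ℤ → ℝ) h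
      push_cast at h2
      linarith
    have hdiff : X - Y = (M:ℝ) * ((p:ℝ) * al) := by
      rw [hX, hY]; push_cast; ring
    have hexp : (M:ℝ) * ((p:ℝ) * al - (s:ℝ)) = (X - ⌊X⌋) - (Y - ⌊Y⌋) := by
      linear_combination hcast - hdiff
    rw [hexp, abs_lt]
    constructor <;> linarith
  have hne : (p:ℝ) * al - (s:ℝ) ≠ 0 := by
    intro hcontra
    have hirr : Irrational ((p:ℝ) * al) := irr_al.natCast_mul (by omega)
    have : (p:ℝ) * al = (s:ℝ) := by linarith
    rw [this] at hirr
    exact hirr.ne_int s rfl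
  have habs : 0 < |(p:ℝ) * al - (s:ℝ)| := abs_pos.2 hne
  obtain ⟨M, hMgt⟩ := exists_nat_gt (2 / |(p:ℝ) * al - (s:ℝ)|)
  have hk := key M
  rw [abs_mul, Nat.abs_cast] at hk
  have h2 : 2 / |(p:ℝ) * al - (s:ℝ)| * |(p:ℝ) * al - (s:ℝ)| = 2 := by
    field_simp
  nlinarith [hk, hMgt, habs, h2]

lemma NN_zero : (NN 0).ncard = 1 := by
  have : NN 0 = {([] : List ℕ)} := by
    ext x
    rw [Set.mem_singleton_iff, mem_NN]
    constructor
    · rintro ⟨i, rfl⟩; rfl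
    · rintro rfl; exact ⟨0, rfl⟩
  rw [this, Set.ncard_singleton]

lemma main : ∀ n : ℕ, (NN n).ncard = n + 1 := by
  intro n
  induction n with
  | zero => exact NN_zero
  | succ n ih =>
    have hub := (NN_finite_card (n+1)).2
    have hmono := NN_mono n
    rcases eq_or_lt_of_le hmono with he | hlt
    · exfalso
      obtain ⟨a, p, hp, hper⟩ := eventually_periodic n he.symm
      exact not_periodic a p hp hper
    · omega

end FibAux

theorem fibWord_subword_complexity :
    ∀ n : ℕ, {x : List ℕ | IsFibFactor x ∧ x.length = n}.ncard = n + 1 :=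
  FibAux.main
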